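/- arXiv:1301.5544 — 2 statements merged into one kernel-verified Lean document; each statement's English description precedes it below -/
import Mathlib

section
/- If Φ(r) = -Gm(r)/r with m(r) = -4π∫₀ʳ p(s)s² ds for a continuous function p, and Φ has a finite limit Φ₀ at r = 0 with Φ'(r)·r → 0 as r → 0, then p(r)·4πGr² → Φ₀ as r → 0⁺, i.e. p(r) = Φ₀/(4πGr²) + O(1). -/
open Real Filter Set MeasureTheory intervalIntegral

/-- Near an integrable singularity, if Φ(r) = -G m(r)/r with
m(r) = -4π∫₀ʳ p(s)s² ds, Φ(r) → Φ₀ and r·Φ'(r) → 0 as r → 0⁺,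
then p(r)·4πGr² → Φ₀ as r → 0⁺. -/
theorem integrable_singularity_pressure_divergence
    (G Φ₀ : ℝ) (hG : 0 < G) (p Φ Φ' : ℝ → ℝ)
    (hp : ContinuousOn p (Set.Ioi 0))
    (hint : ∀ r > 0, IntervalIntegrable (fun s => p s * s ^ 2) volume 0 r)
    (hΦ : ∀ r > 0, Φ r = -G * (-(4 * π) * ∫ s in (0:ℝ)..r, p s * s ^ 2) / r)
    (hderiv : ∀ r > 0, HasDerivAt Φ (Φ' r) r)
    (hlim : Tendsto Φ (nhdsWithin 0 (Set.Ioi 0)) (nhds Φ₀))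
    (hlim' : Tendsto (fun r => r * Φ' r) (nhdsWithin 0 (Set.Ioi 0)) (nhds 0)) :
    Tendsto (fun r => p r * (4 * π * G * r ^ 2)) (nhdsWithin 0 (Set.Ioi 0)) (nhds Φ₀) := by
  have key : ∀ r > 0, p r * (4 * π * G * r ^ 2) = Φ r + r * Φ' r := by
    intro r hr
    have hcont : ContinuousOn (fun s => p s * s ^ 2) (Set.Ioi 0) :=
      hp.mul (continuousOn_id.pow 2)
    have hcat : ContinuousAt (fun s => p s * s ^ 2) r :=
      hcont.continuousAt (isOpen_Ioi.mem_nhds hr)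
    have hI : HasDerivAt (fun t => ∫ s in (0:ℝ)..t, p s * s ^ 2) (p r * r ^ 2) r :=
      intervalIntegral.integral_hasDerivAt_right (hint r hr)
        (hcont.stronglyMeasurableAtFilter isOpen_Ioi r hr) hcat
    have hF : HasDerivAt (fun t => t * Φ t) (1 * Φ r + r * Φ' r) r :=
      (hasDerivAt_id r).mul (hderiv r hr)
    have heq : (fun t => t * Φ t) =ᶠ[nhds r]
        (fun t => 4 * π * G * ∫ s in (0:ℝ)..t, p s * s ^ 2) := by
      filter_upwards [isOpen_Ioi.mem_nhds hr] with t ht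
      rw [hΦ t ht, mul_comm t, div_mul_cancel₀ _ (ne_of_gt ht)]
      ring
    have hF' : HasDerivAt (fun t => 4 * π * G * ∫ s in (0:ℝ)..t, p s * s ^ 2)
        (1 * Φ r + r * Φ' r) r := hF.congr_of_eventuallyEq heq.symm
    have hF'' : HasDerivAt (fun t => 4 * π * G * ∫ s in (0:ℝ)..t, p s * s ^ 2)
        (4 * π * G * (p r * r ^ 2)) r := hI.const_mul _
    have := hF'.unique hF''
    linarith [this]
  have h := hlim.add hlim'
  rw [add_zero] at h
  refine h.congr' ?_
  filter_upwards [self_mem_nhdsWithin] with r hr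
  exact (key r hr).symm
end

section
/- In the limit r₀ → 0 with M fixed, the potential Φ^{(A)} converges pointwise on ℝ \ {0} to -GM/|r|, and the density ε^{(A)}(r) = p₀(r₀²/r² - 1)𝟙_{|r|<r₀} (with p₀ = 3M/(8πr₀³)) converges in the sense of distributions on ℝ to M δ(r)/(2π r²) acting as: for every smooth compactly supported f, ∫ ε^{(A)}(r) 4π r² f(r) dr → 2M f(0). -/
open Real Filter Set MeasureTheory

lemma mass_integral (c r₀ : ℝ) (h : 0 < r₀) :
    ∫ r in Set.Ioo (-r₀) r₀, c * (r₀ ^ 2 - r ^ 2) = c * (4 * r₀ ^ 3 / 3) := by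
  rw [← MeasureTheory.integral_Ioc_eq_integral_Ioo,
    ← intervalIntegral.integral_of_le (by linarith : -r₀ ≤ r₀)]
  have h1 : IntervalIntegrable (fun _ : ℝ => r₀ ^ 2) volume (-r₀) r₀ :=
    intervalIntegrable_const
  have h2 : IntervalIntegrable (fun r : ℝ => r ^ 2) volume (-r₀) r₀ :=
    (continuous_pow 2).intervalIntegrable _ _
  rw [intervalIntegral.integral_const_mul, intervalIntegral.integral_sub h1 h2,
    intervalIntegral.integral_const, integral_pow]
  push_cast
  simp only [smul_eq_mul]
  ring

lemma integrand_eq (M r₀ : ℝ) (f : ℝ → ℝ) (hr₀ : 0 < r₀) :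
    (∫ r : ℝ, (4 * π * r ^ 2) *
        (if |r| < r₀ then (3 * M / (8 * π * r₀ ^ 3)) * (r₀ ^ 2 / r ^ 2 - 1) else 0) * f r)
      = ∫ r in Set.Ioo (-r₀) r₀, (3 * M / (2 * r₀ ^ 3)) * (r₀ ^ 2 - r ^ 2) * f r := by
  have hπ : (π:ℝ) ≠ 0 := Real.pi_ne_zero
  set F : ℝ → ℝ := fun r => (4 * π * r ^ 2) *
        (if |r| < r₀ then (3 * M / (8 * π * r₀ ^ 3)) * (r₀ ^ 2 / r ^ 2 - 1) else 0) * f r with hF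
  have hFind : F = Set.indicator (Set.Ioo (-r₀) r₀) F := by
    funext r
    by_cases hm : r ∈ Set.Ioo (-r₀) r₀
    · rw [Set.indicator_of_mem hm]
    · rw [Set.indicator_of_notMem hm]
      have hcond : ¬ |r| < r₀ := fun h => hm (Set.mem_Ioo.mpr (abs_lt.mp h))
      simp [hF, hcond]
  rw [hFind, MeasureTheory.integral_indicator measurableSet_Ioo]
  refine MeasureTheory.setIntegral_congr_ae measurableSet_Ioo ?_
  have h0 : ∀ᵐ r : ℝ, r ≠ 0 := by
    rw [ae_iff]; simp
  filter_upwards [h0] with r hr hmem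
  have hcond : |r| < r₀ := abs_lt.mpr ⟨hmem.1, hmem.2⟩
  simp only [hF, if_pos hcond]
  have hr₀' : r₀ ≠ 0 := ne_of_gt hr₀
  field_simp
  ring

/-- In the limit r₀ → 0⁺ with M fixed: the potential Φ^{(A)} converges pointwise
on ℝ \ {0} to -GM/|r|, and the density ε^{(A)} (with p₀ = 3M/(8πr₀³)) converges
distributionally to M δ(r)/(2πr²): for every continuous compactly supported f,
∫ 4π r² ε^{(A)}(r) f(r) dr → 2M f(0). -/
theorem delta_source_limit
    (G M : ℝ) (hG : 0 < G) (hM : 0 < M) :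
    (∀ r : ℝ, r ≠ 0 →
      Tendsto (fun r₀ : ℝ =>
          if |r| ≤ r₀ then -(3 * G * M / (2 * r₀)) * (1 - (r / r₀) ^ 2 / 3)
          else -G * M / |r|)
        (nhdsWithin 0 (Set.Ioi 0)) (nhds (-G * M / |r|))) ∧
    (∀ f : ℝ → ℝ, Continuous f → HasCompactSupport f →
      Tendsto (fun r₀ : ℝ =>
          ∫ r : ℝ, (4 * π * r ^ 2) *
            (if |r| < r₀ then (3 * M / (8 * π * r₀ ^ 3)) * (r₀ ^ 2 / r ^ 2 - 1) else 0)
            * f r)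
        (nhdsWithin 0 (Set.Ioi 0)) (nhds (2 * M * f 0))) := by
  constructor
  · intro r hr
    have habs : 0 < |r| := abs_pos.mpr hr
    have hev : (fun _ : ℝ => -G * M / |r|) =ᶠ[nhdsWithin 0 (Set.Ioi 0)]
        (fun r₀ : ℝ =>
          if |r| ≤ r₀ then -(3 * G * M / (2 * r₀)) * (1 - (r / r₀) ^ 2 / 3)
          else -G * M / |r|) := by
      filter_upwards [Ioo_mem_nhdsGT_of_mem
          (by simp [habs] : (0:ℝ) ∈ Set.Ico 0 |r|)] with x hx
      rw [if_neg (not_le.mpr hx.2)]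
    exact Tendsto.congr' hev tendsto_const_nhds
  · intro f hf hfc
    rw [Metric.tendsto_nhdsWithin_nhds]
    intro ε hε
    have hM' : (0:ℝ) < 2 * M + 1 := by linarith
    set ε' := ε / (2 * M + 1) with hε'def
    have hε'pos : 0 < ε' := div_pos hε hM'
    obtain ⟨δ, hδ, hδ'⟩ := Metric.continuousAt_iff.mp (hf.continuousAt (x := 0)) ε' hε'pos
    refine ⟨δ, hδ, ?_⟩
    intro r₀ hr₀ hdist
    have hr₀pos : 0 < r₀ := hr₀
    have hr₀δ : r₀ < δ := by
      rw [Real.dist_eq, sub_zero, abs_of_pos hr₀pos] at hdist; exact hdist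
    rw [Real.dist_eq, integrand_eq M r₀ f hr₀pos]
    set c := 3 * M / (2 * r₀ ^ 3) with hc_def
    have hc : 0 < c := by positivity
    have hcont1 : Continuous (fun r : ℝ => c * (r₀ ^ 2 - r ^ 2) * f r) := by continuity
    have hcont2 : Continuous (fun r : ℝ => c * (r₀ ^ 2 - r ^ 2)) := by continuity
    have hint1 : IntegrableOn (fun r : ℝ => c * (r₀ ^ 2 - r ^ 2) * f r) (Set.Ioo (-r₀) r₀) :=
      (hcont1.integrableOn_Icc).mono_set Set.Ioo_subset_Icc_self
    have hint2 : IntegrableOn (fun r : ℝ => c * (r₀ ^ 2 - r ^ 2)) (Set.Ioo (-r₀) r₀) :=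
      (hcont2.integrableOn_Icc).mono_set Set.Ioo_subset_Icc_self
    have hmass : ∫ r in Set.Ioo (-r₀) r₀, c * (r₀ ^ 2 - r ^ 2) = 2 * M := by
      rw [mass_integral c r₀ hr₀pos, hc_def]
      field_simp
      ring
    have key : (∫ r in Set.Ioo (-r₀) r₀, c * (r₀ ^ 2 - r ^ 2) * f r) - 2 * M * f 0
        = ∫ r in Set.Ioo (-r₀) r₀, c * (r₀ ^ 2 - r ^ 2) * (f r - f 0) := by
      have e1 : (∫ r in Set.Ioo (-r₀) r₀, c * (r₀ ^ 2 - r ^ 2) * (f r - f 0))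
          = ∫ r in Set.Ioo (-r₀) r₀,
              (c * (r₀ ^ 2 - r ^ 2) * f r - c * (r₀ ^ 2 - r ^ 2) * f 0) :=
        MeasureTheory.integral_congr_ae (Filter.Eventually.of_forall fun r => by ring)
      rw [e1, MeasureTheory.integral_sub hint1 (hint2.mul_const (f 0)),
        MeasureTheory.integral_mul_const, hmass]
    rw [key]
    have hbound : (∫ r in Set.Ioo (-r₀) r₀, |c * (r₀ ^ 2 - r ^ 2) * (f r - f 0)|)
        ≤ ∫ r in Set.Ioo (-r₀) r₀, c * (r₀ ^ 2 - r ^ 2) * ε' := by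
      have hcont3 : Continuous (fun r : ℝ => |c * (r₀ ^ 2 - r ^ 2) * (f r - f 0)|) :=
        (hcont2.mul (hf.sub continuous_const)).abs
      have hint3 : IntegrableOn (fun r : ℝ => |c * (r₀ ^ 2 - r ^ 2) * (f r - f 0)|)
          (Set.Ioo (-r₀) r₀) :=
        hcont3.integrableOn_Icc.mono_set Set.Ioo_subset_Icc_self
      refine MeasureTheory.setIntegral_mono_on hint3 (hint2.mul_const ε') measurableSet_Ioo ?_
      intro r hrm
      have hwnn : 0 ≤ c * (r₀ ^ 2 - r ^ 2) := by
        have : |r| < r₀ := abs_lt.mpr ⟨hrm.1, hrm.2⟩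
        have h1 : r ^ 2 < r₀ ^ 2 := by
          have := sq_abs r
          nlinarith [abs_nonneg r]
        nlinarith
      have hfr : |f r - f 0| ≤ ε' := by
        have : dist r 0 < δ := by
          rw [Real.dist_eq, sub_zero]
          exact lt_trans (abs_lt.mpr ⟨hrm.1, hrm.2⟩) hr₀δ
        exact le_of_lt (by simpa [Real.dist_eq] using hδ' this)
      calc |c * (r₀ ^ 2 - r ^ 2) * (f r - f 0)|
          = c * (r₀ ^ 2 - r ^ 2) * |f r - f 0| := by
            rw [abs_mul, abs_of_nonneg hwnn]
        _ ≤ c * (r₀ ^ 2 - r ^ 2) * ε' := by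
            exact mul_le_mul_of_nonneg_left hfr hwnn
    calc |∫ r in Set.Ioo (-r₀) r₀, c * (r₀ ^ 2 - r ^ 2) * (f r - f 0)|
        ≤ ∫ r in Set.Ioo (-r₀) r₀, |c * (r₀ ^ 2 - r ^ 2) * (f r - f 0)| := by
          simpa only [Real.norm_eq_abs] using MeasureTheory.norm_integral_le_integral_norm (μ := volume.restrict (Set.Ioo (-r₀) r₀))
            (fun r => c * (r₀ ^ 2 - r ^ 2) * (f r - f 0))
      _ ≤ ∫ r in Set.Ioo (-r₀) r₀, c * (r₀ ^ 2 - r ^ 2) * ε' := hbound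
      _ = 2 * M * ε' := by rw [MeasureTheory.integral_mul_const, hmass]
      _ < ε := by
          rw [hε'def]
          rw [div_eq_inv_mul]
          have h1 : 2 * M * ((2 * M + 1)⁻¹ * ε) < (2 * M + 1) * ((2 * M + 1)⁻¹ * ε) := by
            have : (0:ℝ) < (2 * M + 1)⁻¹ * ε := by positivity
            nlinarith
          have h2 : (2 * M + 1) * ((2 * M + 1)⁻¹ * ε) = ε := by
            field_simp
          linarith
end
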